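/- Let a > 0 and let b be a real number with 0 < |b| < a, and let α, β ∈ ℝ. Then ∫₀^{2π} (α + β·cos x)·log(a + b·cos x) dx = 2πα·log( (a + √(a² − b²))/2 ) + 2πβ·(a − √(a² − b²))/b. Moreover, in the boundary case b = a one has ∫₀^{2π} (a + a·cos x)·log(a + a·cos x) dx = 2πa·(1 + log(a/2)); in particular ∫₀^{2π} cos²y·log(cos²y) dy = π·(1 − 2·log 2). -/

import Mathlib

open Real intervalIntegral
open Metric Complex

/-- Mean value property from the Cauchy integral formula. -/
lemma cauchy_mean (f : ℂ → ℂ) (hf : DifferentiableOn ℂ f (ball 0 1))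
    (r : ℝ) (h0 : 0 < r) (h1 : r < 1) :
    (∫ x in (0:ℝ)..(2*π), f (circleMap 0 r x)) = (2*π) * f 0 := by
  have hcl : closure (ball (0:ℂ) r) ⊆ ball (0:ℂ) 1 := by
    rw [closure_ball (0:ℂ) h0.ne']
    exact (closedBall_subset_ball h1)
  have hd : DiffContOnCl ℂ f (ball 0 r) :=
    DifferentiableOn.diffContOnCl (hf.mono hcl)
  have hw : (0:ℂ) ∈ ball (0:ℂ) r := by simpa using h0
  have H := hd.circleIntegral_sub_inv_smul hw
  rw [circleIntegral] at H
  simp only [deriv_circleMap, smul_eq_mul, sub_zero] at H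
  have key : ∀ x : ℝ, circleMap 0 r x * Complex.I * ((circleMap 0 r x)⁻¹ * f (circleMap 0 r x))
      = Complex.I * f (circleMap 0 r x) := by
    intro x
    have hne : circleMap 0 r x ≠ 0 := by
      simpa using circleMap_ne_center (c := (0:ℂ)) h0.ne' (θ := x)
    field_simp
  simp only [key] at H
  rw [intervalIntegral.integral_const_mul] at H
  have hI : (Complex.I : ℂ) ≠ 0 := Complex.I_ne_zero
  apply mul_left_cancel₀ hI
  rw [H]; ring

lemma cauchy_mean' (f : ℂ → ℂ) (hf : DifferentiableOn ℂ f (ball 0 1))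
    (r : ℝ) (h0 : r ≠ 0) (h1 : |r| < 1) :
    (∫ x in (0:ℝ)..(2*π), f ((r:ℂ) * Complex.exp (x * Complex.I))) = (2*π) * f 0 := by
  rcases h0.lt_or_gt with hneg | hpos
  · have habs : |r| = -r := abs_of_neg hneg
    have hg : DifferentiableOn ℂ (fun z => f (-z)) (ball 0 1) := by
      apply DifferentiableOn.comp hf (differentiable_neg.differentiableOn)
      intro z hz
      simpa using hz
    have := cauchy_mean (fun z => f (-z)) hg (-r) (by linarith) (by rw [habs] at h1; linarith)
    simp only [circleMap, zero_add, neg_zero] at this ⊢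
    rw [← this]
    congr 1
    ext x
    congr 1
    push_cast
    ring
  · have := cauchy_mean f hf r hpos (by rwa [abs_of_pos hpos] at h1)
    simp only [circleMap, zero_add] at this
    exact this

lemma D_pos {r : ℝ} (h1 : |r| < 1) (x : ℝ) : 0 < 1 + 2*r*Real.cos x + r^2 := by
  have h2 : |r * Real.cos x| ≤ |r| := by
    rw [abs_mul]
    nlinarith [abs_nonneg r, Real.abs_cos_le_one x]
  have h3 := abs_le.1 h2
  nlinarith [abs_nonneg r, _root_.sq_abs r]

lemma abs_sq_eq_D (r x : ℝ) :
    ‖1 + (r:ℂ) * Complex.exp (x * Complex.I)‖ ^ 2 = 1 + 2*r*Real.cos x + r^2 := by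
  rw [Complex.sq_norm, Complex.exp_mul_I, Complex.normSq_apply]
  simp only [Complex.add_re, Complex.add_im, Complex.one_re, Complex.one_im, Complex.mul_re,
    Complex.mul_im, Complex.ofReal_re, Complex.ofReal_im, Complex.cos_ofReal_re,
    Complex.cos_ofReal_im, Complex.sin_ofReal_re, Complex.sin_ofReal_im, Complex.I_re,
    Complex.I_im]
  ring_nf
  nlinarith [Real.sin_sq_add_cos_sq x]

lemma mem_slit {z : ℂ} (hz : ‖z‖ < 1) : 1 + z ∈ Complex.slitPlane := by
  rw [Complex.mem_slitPlane_iff]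
  left
  simp only [Complex.add_re, Complex.one_re]
  have := Complex.abs_re_le_norm z
  nlinarith [abs_lt.1 (lt_of_le_of_lt this hz)]

lemma abs_r_exp (r x : ℝ) : ‖(r:ℂ) * Complex.exp (x * Complex.I)‖ = |r| := by
  rw [norm_mul, Complex.norm_exp_ofReal_mul_I, Complex.norm_real, Real.norm_eq_abs, mul_one]

lemma diff_log : DifferentiableOn ℂ (fun z => Complex.log (1+z)) (ball 0 1) := by
  intro z hz
  apply DifferentiableAt.differentiableWithinAt
  apply DifferentiableAt.clog (by fun_prop)
  apply mem_slit
  simpa using hz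

lemma integral_log_D {r : ℝ} (h0 : r ≠ 0) (h1 : |r| < 1) :
    (∫ x in (0:ℝ)..(2*π), Real.log (1 + 2*r*Real.cos x + r^2)) = 0 := by
  have key := cauchy_mean' _ diff_log r h0 h1
  have hre : ∀ x : ℝ, Real.log (1 + 2*r*Real.cos x + r^2)
      = 2 * (Complex.log (1 + (r:ℂ) * Complex.exp (x * Complex.I))).re := by
    intro x
    rw [Complex.log_re, ← abs_sq_eq_D r x, Real.log_pow]
    push_cast
    ring
  have hint : IntervalIntegrable (fun x : ℝ => Complex.log (1 + (r:ℂ) * Complex.exp (x * Complex.I)))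
      MeasureTheory.volume 0 (2*π) := by
    apply Continuous.intervalIntegrable
    rw [continuous_iff_continuousAt]
    intro x
    apply ContinuousAt.clog (by fun_prop)
    apply mem_slit
    rw [abs_r_exp]; exact h1
  calc (∫ x in (0:ℝ)..(2*π), Real.log (1 + 2*r*Real.cos x + r^2))
      = ∫ x in (0:ℝ)..(2*π), 2 * (Complex.log (1 + (r:ℂ) * Complex.exp (x * Complex.I))).re := by
        simp_rw [hre]
    _ = 2 * ∫ x in (0:ℝ)..(2*π), (Complex.reCLM (Complex.log (1 + (r:ℂ) * Complex.exp (x * Complex.I))) : ℝ) := by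
        rw [intervalIntegral.integral_const_mul]; rfl
    _ = 2 * Complex.reCLM (∫ x in (0:ℝ)..(2*π), Complex.log (1 + (r:ℂ) * Complex.exp (x * Complex.I))) := by
        rw [ContinuousLinearMap.intervalIntegral_comp_comm _ hint]
    _ = 0 := by
        rw [key]; simp

lemma integral_re_cauchy (f : ℂ → ℂ) (hf : DifferentiableOn ℂ f (ball 0 1)) {r : ℝ}
    (h0 : r ≠ 0) (h1 : |r| < 1)
    (hc : Continuous fun x : ℝ => f ((r:ℂ) * Complex.exp (x * Complex.I))) :
    (∫ x in (0:ℝ)..(2*π), (f ((r:ℂ) * Complex.exp (x * Complex.I))).re) = 2*π*(f 0).re := by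
  have key := cauchy_mean' f hf r h0 h1
  calc (∫ x in (0:ℝ)..(2*π), (f ((r:ℂ) * Complex.exp (x * Complex.I))).re)
      = Complex.reCLM (∫ x in (0:ℝ)..(2*π), f ((r:ℂ) * Complex.exp (x * Complex.I))) := by
        rw [← ContinuousLinearMap.intervalIntegral_comp_comm _ (hc.intervalIntegrable 0 (2*π))]; rfl
    _ = 2*π*(f 0).re := by rw [key]; simp

lemma one_add_ne {r x : ℝ} (h1 : |r| < 1) : (1:ℂ) + (r:ℂ) * Complex.exp (x * Complex.I) ≠ 0 :=
  Complex.slitPlane_ne_zero (mem_slit (by rw [abs_r_exp]; exact h1))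

lemma integral_inv_D {r : ℝ} (h0 : r ≠ 0) (h1 : |r| < 1) :
    (∫ x in (0:ℝ)..(2*π), (1 + 2*r*Real.cos x + r^2)⁻¹) = 2*π/(1-r^2) := by
  set f : ℂ → ℂ := fun z => (1 - z)/(1 + z) with hfdef
  have hf : DifferentiableOn ℂ f (ball 0 1) := by
    intro z hz
    apply DifferentiableAt.differentiableWithinAt
    apply DifferentiableAt.div (by fun_prop) (by fun_prop)
    intro h
    simp only [mem_ball, dist_zero_right] at hz
    rw [eq_neg_of_add_eq_zero_right h] at hz
    simp at hz
  have hc : Continuous fun x : ℝ => f ((r:ℂ) * Complex.exp (x * Complex.I)) := by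
    apply Continuous.div (by fun_prop) (by fun_prop)
    intro x
    exact one_add_ne h1
  have hre : ∀ x : ℝ, (f ((r:ℂ) * Complex.exp (x * Complex.I))).re
      = (1 - r^2) * (1 + 2*r*Real.cos x + r^2)⁻¹ := by
    intro x
    have hns : Complex.normSq (1 + (r:ℂ) * Complex.exp (x * Complex.I))
        = 1 + 2*r*Real.cos x + r^2 := by
      rw [← Complex.sq_norm]; exact abs_sq_eq_D r x
    have hrex : ((r:ℂ) * Complex.exp (x * Complex.I)).re = r * Real.cos x := by
      rw [Complex.exp_mul_I]
      simp [Complex.cos_ofReal_re]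
    have himx : ((r:ℂ) * Complex.exp (x * Complex.I)).im = r * Real.sin x := by
      rw [Complex.exp_mul_I]
      simp [Complex.sin_ofReal_re]
    rw [hfdef]
    simp only [Complex.div_re, hns, Complex.add_re, Complex.sub_re, Complex.one_re, hrex,
      Complex.add_im, Complex.sub_im, Complex.one_im, himx, zero_sub, zero_add]
    have hD := D_pos h1 x
    field_simp
    congr 1
    linear_combination (-r^2) * Real.sin_sq_add_cos_sq x
  have key := integral_re_cauchy f hf h0 h1 hc
  simp_rw [hre] at key
  rw [intervalIntegral.integral_const_mul] at key
  have hf0 : (f 0).re = 1 := by rw [hfdef]; simp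
  rw [hf0, mul_one] at key
  have hr2 : 1 - r^2 ≠ 0 := by nlinarith [abs_lt.1 h1]
  field_simp at key ⊢
  linarith [key]

lemma contD {r : ℝ} : Continuous fun x : ℝ => 1 + 2*r*Real.cos x + r^2 := by fun_prop

lemma contDinv {r : ℝ} (h1 : |r| < 1) :
    Continuous fun x : ℝ => (1 + 2*r*Real.cos x + r^2)⁻¹ :=
  contD.inv₀ (fun x => (D_pos h1 x).ne')

lemma integral_D (r : ℝ) :
    (∫ x in (0:ℝ)..(2*π), (1 + 2*r*Real.cos x + r^2)) = 2*π*(1+r^2) := by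
  have h1 : (∫ x in (0:ℝ)..(2*π), (1 + 2*r*Real.cos x + r^2))
      = (∫ x in (0:ℝ)..(2*π), ((1+r^2) + 2*r*Real.cos x)) := by
    apply intervalIntegral.integral_congr
    intro x _
    ring
  rw [h1, intervalIntegral.integral_add (intervalIntegrable_const)
    ((by fun_prop : Continuous fun x : ℝ => 2*r*Real.cos x).intervalIntegrable _ _),
    intervalIntegral.integral_const_mul, integral_cos]
  simp [Real.sin_two_pi]
  ring

lemma integral_sin_sq_div_D {r : ℝ} (h0 : r ≠ 0) (h1 : |r| < 1) :
    (∫ x in (0:ℝ)..(2*π), Real.sin x^2 / (1 + 2*r*Real.cos x + r^2)) = π := by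
  have hr2 : 1 - r^2 ≠ 0 := by nlinarith [abs_lt.1 h1]
  have hid : ∀ x : ℝ, Real.sin x^2 / (1 + 2*r*Real.cos x + r^2)
      = (4*r^2)⁻¹ * (2*(1+r^2) - (1 + 2*r*Real.cos x + r^2)
          - (1-r^2)^2 * (1 + 2*r*Real.cos x + r^2)⁻¹) := by
    intro x
    have hD := (D_pos h1 x).ne'
    field_simp
    linear_combination (4*r^2) * (Real.sin_sq_add_cos_sq x)
  simp_rw [hid]
  rw [intervalIntegral.integral_const_mul]
  rw [intervalIntegral.integral_sub (intervalIntegrable_const.sub (contD.intervalIntegrable _ _))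
    (((contDinv h1).intervalIntegrable _ _).const_mul _),
    intervalIntegral.integral_sub intervalIntegrable_const (contD.intervalIntegrable _ _),
    intervalIntegral.integral_const, integral_D,
    intervalIntegral.integral_const_mul, integral_inv_D h0 h1]
  have h4 : (4:ℝ)*r^2 ≠ 0 := by positivity
  simp only [smul_eq_mul, sub_zero]
  field_simp
  ring

lemma contLogD {r : ℝ} (h1 : |r| < 1) :
    Continuous fun x : ℝ => Real.log (1 + 2*r*Real.cos x + r^2) := by
  exact contD.log fun x => (D_pos h1 x).ne'

lemma integral_cos_mul_log_D {r : ℝ} (h0 : r ≠ 0) (h1 : |r| < 1) :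
    (∫ x in (0:ℝ)..(2*π), Real.cos x * Real.log (1 + 2*r*Real.cos x + r^2)) = 2*π*r := by
  have hu : ∀ x ∈ Set.uIcc (0:ℝ) (2*π), HasDerivAt (fun x => Real.log (1 + 2*r*Real.cos x + r^2))
      (2*r*(-Real.sin x) / (1 + 2*r*Real.cos x + r^2)) x := by
    intro x _
    have hD : HasDerivAt (fun x : ℝ => 1 + 2*r*Real.cos x + r^2) (2*r*(-Real.sin x)) x := by
      simpa using (((Real.hasDerivAt_cos x).const_mul (2*r)).const_add 1).add_const (r^2)
    exact hD.log (D_pos h1 x).ne'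
  have hv : ∀ x ∈ Set.uIcc (0:ℝ) (2*π), HasDerivAt Real.sin (Real.cos x) x :=
    fun x _ => Real.hasDerivAt_sin x
  have hu' : IntervalIntegrable (fun x => 2*r*(-Real.sin x) / (1 + 2*r*Real.cos x + r^2))
      MeasureTheory.volume 0 (2*π) := by
    apply Continuous.intervalIntegrable
    exact ((continuous_const.mul Real.continuous_sin.neg).div contD fun x => (D_pos h1 x).ne')
  have hv' : IntervalIntegrable Real.cos MeasureTheory.volume 0 (2*π) :=
    Real.continuous_cos.intervalIntegrable _ _
  have H := intervalIntegral.integral_mul_deriv_eq_deriv_mul hu hv hu' hv'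
  have hswap : (∫ x in (0:ℝ)..(2*π), Real.cos x * Real.log (1 + 2*r*Real.cos x + r^2))
      = ∫ x in (0:ℝ)..(2*π), Real.log (1 + 2*r*Real.cos x + r^2) * Real.cos x := by
    apply intervalIntegral.integral_congr; intro x _; ring
  rw [hswap, H, Real.sin_two_pi, Real.sin_zero]
  have h2 : (∫ x in (0:ℝ)..(2*π), 2*r*(-Real.sin x) / (1 + 2*r*Real.cos x + r^2) * Real.sin x)
      = (-2*r) * ∫ x in (0:ℝ)..(2*π), Real.sin x^2 / (1 + 2*r*Real.cos x + r^2) := by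
    rw [← intervalIntegral.integral_const_mul]
    apply intervalIntegral.integral_congr; intro x _
    field_simp
  rw [h2, integral_sin_sq_div_D h0 h1]
  ring

lemma part1 (a b α β : ℝ) (ha : 0 < a) (hb : 0 < |b|) (hba : |b| < a) :
    (∫ x in (0:ℝ)..(2 * π), (α + β * Real.cos x) * Real.log (a + b * Real.cos x)) =
      2 * π * α * Real.log ((a + Real.sqrt (a ^ 2 - b ^ 2)) / 2) +
        2 * π * β * ((a - Real.sqrt (a ^ 2 - b ^ 2)) / b) := by
  have hbne : b ≠ 0 := fun h => by simp [h] at hb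
  set s := Real.sqrt (a^2 - b^2) with hsdef
  have hb2 : b^2 < a^2 := by nlinarith [abs_nonneg b, _root_.sq_abs b]
  have hs0 : 0 ≤ s := Real.sqrt_nonneg _
  have hs2 : s^2 = a^2 - b^2 := Real.sq_sqrt (by nlinarith)
  have hbp : 0 < b^2 := by positivity
  have hsa : s < a := by nlinarith
  have has : 0 < a + s := by linarith
  set r := b / (a + s) with hrdef
  have hr0 : r ≠ 0 := div_ne_zero hbne has.ne'
  have hr1 : |r| < 1 := by
    rw [hrdef, abs_div, abs_of_pos has, div_lt_one has]
    linarith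
  have key : ∀ x : ℝ, a + b * Real.cos x = ((a+s)/2) * (1 + 2*r*Real.cos x + r^2) := by
    intro x
    have hb2s : b^2 = a^2 - s^2 := by linarith
    rw [hrdef]
    field_simp
    linear_combination (-1:ℝ) * hb2s
  have hlog : ∀ x : ℝ, Real.log (a + b * Real.cos x)
      = Real.log ((a+s)/2) + Real.log (1 + 2*r*Real.cos x + r^2) := by
    intro x
    rw [key x, Real.log_mul (by positivity) (D_pos hr1 x).ne']
  have hexp : (∫ x in (0:ℝ)..(2 * π), (α + β * Real.cos x) * Real.log (a + b * Real.cos x))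
      = ∫ x in (0:ℝ)..(2 * π), ((α * Real.log ((a+s)/2)
          + (β * Real.log ((a+s)/2)) * Real.cos x)
          + (α * Real.log (1 + 2*r*Real.cos x + r^2)
          + β * (Real.cos x * Real.log (1 + 2*r*Real.cos x + r^2)))) := by
    apply intervalIntegral.integral_congr
    intro x _
    dsimp only
    rw [hlog x]
    ring
  have i1 : IntervalIntegrable (fun x : ℝ => α * Real.log ((a+s)/2)
      + (β * Real.log ((a+s)/2)) * Real.cos x) MeasureTheory.volume 0 (2*π) :=
    (by fun_prop : Continuous fun x : ℝ => α * Real.log ((a+s)/2)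
      + (β * Real.log ((a+s)/2)) * Real.cos x).intervalIntegrable _ _
  have i2 : IntervalIntegrable (fun x : ℝ => α * Real.log (1 + 2*r*Real.cos x + r^2)
      + β * (Real.cos x * Real.log (1 + 2*r*Real.cos x + r^2))) MeasureTheory.volume 0 (2*π) :=
    ((continuous_const.mul (contLogD hr1)).add
      (continuous_const.mul (Real.continuous_cos.mul (contLogD hr1)))).intervalIntegrable _ _
  rw [hexp, intervalIntegral.integral_add i1 i2,
    intervalIntegral.integral_add intervalIntegrable_const
      ((by fun_prop : Continuous fun x : ℝ =>
        (β * Real.log ((a+s)/2)) * Real.cos x).intervalIntegrable _ _),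
    intervalIntegral.integral_add (((contLogD hr1).intervalIntegrable _ _).const_mul _)
      (((show IntervalIntegrable
        (fun x => Real.cos x * Real.log (1 + 2*r*Real.cos x + r^2)) MeasureTheory.volume 0 (2*π) from
          (Real.continuous_cos.mul (contLogD hr1)).intervalIntegrable _ _)).const_mul _),
    intervalIntegral.integral_const]
  rw [intervalIntegral.integral_const_mul, integral_cos]
  rw [intervalIntegral.integral_const_mul, integral_log_D hr0 hr1]
  rw [intervalIntegral.integral_const_mul, integral_cos_mul_log_D hr0 hr1]
  have hreq : r = (a - s)/b := by
    have hb2s : b^2 = a^2 - s^2 := by linarith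
    rw [hrdef]
    field_simp
    linear_combination hb2s
  rw [Real.sin_two_pi, Real.sin_zero, hreq]
  simp only [smul_eq_mul, sub_zero]
  ring

lemma bdd_intervalIntegrable (f : ℝ → ℝ) (hf : Measurable f) (C : ℝ)
    (hC : ∀ x, |f x| ≤ C) (a b : ℝ) : IntervalIntegrable f MeasureTheory.volume a b := by
  rw [intervalIntegrable_iff]
  apply MeasureTheory.Integrable.mono' (g := fun _ => C)
    (MeasureTheory.integrableOn_const measure_Ioc_lt_top.ne)
    hf.aestronglyMeasurable.restrict
  filter_upwards with x using by simpa using hC x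

lemma abs_mul_log_le {t : ℝ} (h0 : 0 ≤ t) (h2 : t ≤ 2) : |t * Real.log t| ≤ 2 := by
  rcases eq_or_lt_of_le h0 with h | h
  · simp [← h]
  rcases le_total t 1 with h1 | h1
  · have hlog : Real.log t ≤ 0 := Real.log_nonpos h0 h1
    have hinv : Real.log t⁻¹ ≤ t⁻¹ - 1 := Real.log_le_sub_one_of_pos (by positivity)
    rw [Real.log_inv] at hinv
    rw [_root_.abs_of_nonpos (mul_nonpos_of_nonneg_of_nonpos h0 hlog)]
    have heq : -(t * Real.log t) = t * (-Real.log t) := by ring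
    rw [heq]
    calc t * (-Real.log t) ≤ t * (t⁻¹ - 1) := by
          apply mul_le_mul_of_nonneg_left (by linarith) h0
      _ = 1 - t := by field_simp
      _ ≤ 2 := by linarith
  · have hlog : 0 ≤ Real.log t := Real.log_nonneg h1
    have hle : Real.log t ≤ t - 1 := Real.log_le_sub_one_of_pos h
    rw [_root_.abs_of_nonneg (mul_nonneg h0 hlog)]
    nlinarith

lemma G_measurable : Measurable fun x : ℝ => (1 + Real.cos x) * Real.log (1 + Real.cos x) :=
  (measurable_const.add Real.measurable_cos).mul
    (measurable_const.add Real.measurable_cos).log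

lemma G_abs_le (x : ℝ) : |(1 + Real.cos x) * Real.log (1 + Real.cos x)| ≤ 2 :=
  abs_mul_log_le (by nlinarith [Real.neg_one_le_cos x]) (by nlinarith [Real.cos_le_one x])

lemma G_intervalIntegrable (a b : ℝ) :
    IntervalIntegrable (fun x : ℝ => (1 + Real.cos x) * Real.log (1 + Real.cos x))
      MeasureTheory.volume a b :=
  bdd_intervalIntegrable _ G_measurable 2 G_abs_le a b

lemma integral_one_add_cos_mul_log_D {r : ℝ} (h0 : r ≠ 0) (h1 : |r| < 1) :
    (∫ x in (0:ℝ)..(2*π), (1 + Real.cos x) * Real.log (1 + 2*r*Real.cos x + r^2)) = 2*π*r := by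
  have hsplit : (∫ x in (0:ℝ)..(2*π), (1 + Real.cos x) * Real.log (1 + 2*r*Real.cos x + r^2))
      = (∫ x in (0:ℝ)..(2*π), Real.log (1 + 2*r*Real.cos x + r^2))
        + ∫ x in (0:ℝ)..(2*π), Real.cos x * Real.log (1 + 2*r*Real.cos x + r^2) := by
    rw [← intervalIntegral.integral_add ((contLogD h1).intervalIntegrable _ _)
      (show IntervalIntegrable
        (fun x => Real.cos x * Real.log (1 + 2*r*Real.cos x + r^2)) MeasureTheory.volume 0 (2*π) from
          (Real.continuous_cos.mul (contLogD h1)).intervalIntegrable _ _)]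
    apply intervalIntegral.integral_congr
    intro x _
    ring
  rw [hsplit, integral_log_D h0 h1, integral_cos_mul_log_D h0 h1, zero_add]

lemma F_bound {r : ℝ} (h1 : 1/2 ≤ r) (h2 : r < 1) (x : ℝ) :
    |(1 + Real.cos x) * Real.log (1 + 2*r*Real.cos x + r^2)| ≤ 4 := by
  have hr1 : |r| < 1 := by rw [_root_.abs_of_nonneg (by linarith)]; exact h2
  have hD := D_pos hr1 x
  have hc1 := Real.neg_one_le_cos x
  have hc2 := Real.cos_le_one x
  have hDbig : 1 + Real.cos x ≤ 1 + 2*r*Real.cos x + r^2 := by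
    nlinarith [mul_nonneg (by linarith : (0:ℝ) ≤ 2*r - 1) (by linarith : (0:ℝ) ≤ 1 + Real.cos x),
      sq_nonneg (1 - r)]
  have hDle : 1 + 2*r*Real.cos x + r^2 ≤ 4 := by nlinarith
  rcases le_total 1 (1 + 2*r*Real.cos x + r^2) with hge | hlt
  · have hlog0 : 0 ≤ Real.log (1 + 2*r*Real.cos x + r^2) := Real.log_nonneg hge
    have hlog4 : Real.log (1 + 2*r*Real.cos x + r^2) ≤ Real.log 4 := Real.log_le_log hD hDle
    have h42 : Real.log 4 ≤ 2 := by
      have h4 : (4:ℝ) = 2^2 := by norm_num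
      rw [h4, Real.log_pow]
      have := Real.log_le_sub_one_of_pos (by norm_num : (0:ℝ) < 2)
      push_cast
      linarith
    rw [abs_mul, _root_.abs_of_nonneg (by linarith : (0:ℝ) ≤ 1 + Real.cos x),
      _root_.abs_of_nonneg hlog0]
    nlinarith
  · rcases eq_or_lt_of_le hc1 with hcm | hcm
    · rw [← hcm]
      norm_num
    · have hcpos : 0 < 1 + Real.cos x := by linarith
      have hmono : Real.log (1 + Real.cos x) ≤ Real.log (1 + 2*r*Real.cos x + r^2) :=
        Real.log_le_log hcpos hDbig
      have hlogD : Real.log (1 + 2*r*Real.cos x + r^2) ≤ 0 := Real.log_nonpos hD.le hlt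
      have step : |(1 + Real.cos x) * Real.log (1 + 2*r*Real.cos x + r^2)|
          ≤ |(1 + Real.cos x) * Real.log (1 + Real.cos x)| := by
        rw [abs_mul, abs_mul, _root_.abs_of_nonpos hlogD,
          _root_.abs_of_nonpos (Real.log_nonpos hcpos.le (by linarith)),
          _root_.abs_of_nonneg hcpos.le]
        exact mul_le_mul_of_nonneg_left (by linarith) hcpos.le
      linarith [G_abs_le x]

lemma integral_J : (∫ x in (0:ℝ)..(2*π), (1 + Real.cos x) * Real.log (1 + Real.cos x))
    = 2*π*(1 - Real.log 2) := by
  obtain ⟨r, hrlb, hrub, hrlim⟩ : ∃ r : ℕ → ℝ, (∀ n, 1/2 ≤ r n) ∧ (∀ n, r n < 1)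
      ∧ Filter.Tendsto r Filter.atTop (nhds 1) := by
    refine ⟨fun n => 1 - (1/2)^(n+1), fun n => ?_, fun n => ?_, ?_⟩
    · have : ((1:ℝ)/2)^(n+1) ≤ (1/2)^1 :=
        pow_le_pow_of_le_one (by norm_num) (by norm_num) (by omega)
      simp only [pow_one] at this
      linarith
    · have : (0:ℝ) < (1/2)^(n+1) := by positivity
      linarith
    · have hp : Filter.Tendsto (fun n : ℕ => ((1:ℝ)/2)^(n+1)) Filter.atTop (nhds 0) :=
        (tendsto_pow_atTop_nhds_zero_of_lt_one (by norm_num) (by norm_num)).comp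
          (Filter.tendsto_add_atTop_nat 1)
      simpa using tendsto_const_nhds.sub hp
  have hr0 : ∀ n, r n ≠ 0 := fun n => by have := hrlb n; intro h; rw [h] at this; norm_num at this
  have hr1 : ∀ n, |r n| < 1 := fun n => by
    rw [_root_.abs_of_nonneg (by linarith [hrlb n] : (0:ℝ) ≤ r n)]; exact hrub n
  have hlim1 : Filter.Tendsto
      (fun n => ∫ x in (0:ℝ)..(2*π), (1 + Real.cos x) * Real.log (1 + 2*(r n)*Real.cos x + (r n)^2))
      Filter.atTop
      (nhds (∫ x in (0:ℝ)..(2*π), (1 + Real.cos x) * Real.log (2 + 2*Real.cos x))) := by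
    apply intervalIntegral.tendsto_integral_filter_of_dominated_convergence (fun _ => 4)
    · filter_upwards with n
      exact ((by fun_prop : Continuous fun x : ℝ => (1:ℝ) + Real.cos x).mul
        (contLogD (hr1 n))).aestronglyMeasurable.restrict
    · filter_upwards with n
      filter_upwards with x _
      exact F_bound (hrlb n) (hrub n) x
    · exact intervalIntegrable_const
    · filter_upwards with x _
      rcases eq_or_lt_of_le (Real.neg_one_le_cos x) with hcm | hcm
      · have hF0 : ∀ n, (1 + Real.cos x) * Real.log (1 + 2*(r n)*Real.cos x + (r n)^2) = 0 := by
          intro n; rw [← hcm]; ring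
        have hG0 : (1 + Real.cos x) * Real.log (2 + 2*Real.cos x) = 0 := by rw [← hcm]; ring
        rw [hG0]
        simp only [hF0]
        exact tendsto_const_nhds
      · have hpos : 0 < 2 + 2*Real.cos x := by linarith
        have hcont : Continuous fun ρ : ℝ => 1 + 2*ρ*Real.cos x + ρ^2 := by fun_prop
        have h1 : Filter.Tendsto (fun n => 1 + 2*(r n)*Real.cos x + (r n)^2) Filter.atTop
            (nhds (2 + 2*Real.cos x)) := by
          have h := (hcont.continuousAt (x := 1)).tendsto.comp hrlim
          change Filter.Tendsto (fun n => 1 + 2*(r n)*Real.cos x + (r n)^2) Filter.atTop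
            (nhds (1 + 2*(1:ℝ)*Real.cos x + (1:ℝ)^2)) at h
          have he : 1 + 2*(1:ℝ)*Real.cos x + (1:ℝ)^2 = 2 + 2*Real.cos x := by ring
          rwa [he] at h
        exact ((Real.continuousAt_log hpos.ne').tendsto.comp h1).const_mul (1 + Real.cos x)
  have hFint : ∀ n, (∫ x in (0:ℝ)..(2*π),
      (1 + Real.cos x) * Real.log (1 + 2*(r n)*Real.cos x + (r n)^2)) = 2*π*(r n) := fun n =>
    integral_one_add_cos_mul_log_D (hr0 n) (hr1 n)
  simp_rw [hFint] at hlim1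
  have hlim2 : Filter.Tendsto (fun n => (2:ℝ)*π*(r n)) Filter.atTop (nhds (2*π)) := by
    have h := hrlim.const_mul (2*π)
    rwa [mul_one] at h
  have hGeq : (∫ x in (0:ℝ)..(2*π), (1 + Real.cos x) * Real.log (2 + 2*Real.cos x))
      = (∫ x in (0:ℝ)..(2*π), (1 + Real.cos x) * Real.log (1 + Real.cos x))
        + ∫ x in (0:ℝ)..(2*π), Real.log 2 * (1 + Real.cos x) := by
    rw [← intervalIntegral.integral_add (G_intervalIntegrable _ _)
      ((by fun_prop : Continuous fun x : ℝ =>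
        Real.log 2 * (1 + Real.cos x)).intervalIntegrable _ _)]
    apply intervalIntegral.integral_congr
    intro x _
    dsimp only
    rcases eq_or_lt_of_le (Real.neg_one_le_cos x) with hcm | hcm
    · rw [← hcm]; ring
    · have hxp : 0 < 1 + Real.cos x := by linarith
      have heq : 2 + 2*Real.cos x = 2 * (1 + Real.cos x) := by ring
      rw [heq, Real.log_mul (by norm_num) hxp.ne']
      ring
  have hc2 : (∫ x in (0:ℝ)..(2*π), Real.log 2 * (1 + Real.cos x)) = Real.log 2 * (2*π) := by
    rw [intervalIntegral.integral_const_mul,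
      intervalIntegral.integral_add intervalIntegrable_const
        (Real.continuous_cos.intervalIntegrable _ _),
      intervalIntegral.integral_const, integral_cos]
    simp [Real.sin_two_pi]
  have huniq := tendsto_nhds_unique hlim1 hlim2
  rw [hGeq, hc2] at huniq
  linarith

lemma integral_one_add_cos : (∫ x in (0:ℝ)..(2*π), (1 + Real.cos x)) = 2*π := by
  rw [intervalIntegral.integral_add intervalIntegrable_const
    (Real.continuous_cos.intervalIntegrable _ _), intervalIntegral.integral_const, integral_cos]
  simp [Real.sin_two_pi]

lemma part2 (a : ℝ) (ha : 0 < a) :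
    (∫ x in (0:ℝ)..(2 * π), (a + a * Real.cos x) * Real.log (a + a * Real.cos x)) =
      2 * π * a * (1 + Real.log (a / 2)) := by
  have hexp : (∫ x in (0:ℝ)..(2 * π), (a + a * Real.cos x) * Real.log (a + a * Real.cos x))
      = ∫ x in (0:ℝ)..(2 * π), ((a * Real.log a) * (1 + Real.cos x)
          + a * ((1 + Real.cos x) * Real.log (1 + Real.cos x))) := by
    apply intervalIntegral.integral_congr
    intro x _
    dsimp only
    rcases eq_or_lt_of_le (Real.neg_one_le_cos x) with hcm | hcm
    · rw [← hcm]; ring_nf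
    · have hxp : 0 < 1 + Real.cos x := by linarith
      have heq : a + a * Real.cos x = a * (1 + Real.cos x) := by ring
      rw [heq, Real.log_mul ha.ne' hxp.ne']
      ring
  rw [hexp, intervalIntegral.integral_add
    ((by fun_prop : Continuous fun x : ℝ => (a * Real.log a) * (1 + Real.cos x)).intervalIntegrable _ _)
    ((G_intervalIntegrable 0 (2*π)).const_mul a),
    intervalIntegral.integral_const_mul, intervalIntegral.integral_const_mul,
    integral_one_add_cos, integral_J, Real.log_div ha.ne' (by norm_num)]
  ring

lemma part3 : (∫ y in (0:ℝ)..(2 * π), Real.cos y ^ 2 * Real.log (Real.cos y ^ 2)) =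
    π * (1 - 2 * Real.log 2) := by
  have hper : Function.Periodic (fun x : ℝ => (1 + Real.cos x) * Real.log (1 + Real.cos x))
      (2*π) := fun x => by simp only []; rw [Real.cos_add_two_pi]
  have hexp : (∫ y in (0:ℝ)..(2 * π), Real.cos y ^ 2 * Real.log (Real.cos y ^ 2))
      = ∫ y in (0:ℝ)..(2 * π), ((1/2) * ((1 + Real.cos (2*y)) * Real.log (1 + Real.cos (2*y)))
          - Real.log 2 * Real.cos y ^ 2) := by
    apply intervalIntegral.integral_congr
    intro y _
    dsimp only
    have h2c : Real.cos (2*y) = 2 * Real.cos y^2 - 1 := Real.cos_two_mul y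
    rcases eq_or_ne (Real.cos y) 0 with hc | hc
    · rw [h2c, hc]; norm_num
    · have hxp : 0 < Real.cos y ^ 2 := by positivity
      have heq : 1 + Real.cos (2*y) = 2 * Real.cos y ^ 2 := by rw [h2c]; ring
      rw [heq, Real.log_mul (by norm_num) hxp.ne']
      ring
  have hG2int : IntervalIntegrable
      (fun y : ℝ => (1 + Real.cos (2*y)) * Real.log (1 + Real.cos (2*y)))
      MeasureTheory.volume 0 (2*π) := by
    apply bdd_intervalIntegrable _ (G_measurable.comp (measurable_const_mul 2)) 2
    intro x
    exact G_abs_le (2*x)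
  have hX : (∫ y in (0:ℝ)..(2 * π), (1 + Real.cos (2*y)) * Real.log (1 + Real.cos (2*y)))
      = 2*π*(1 - Real.log 2) := by
    have hcomp := intervalIntegral.integral_comp_mul_left
      (a := (0:ℝ)) (b := 2*π)
      (fun x : ℝ => (1 + Real.cos x) * Real.log (1 + Real.cos x)) (two_ne_zero)
    rw [hcomp]
    have hb : (2:ℝ) * (2*π) = 2*π + 2*π := by ring
    have hsplit : (∫ x in (2*0:ℝ)..(2*(2*π)), (1 + Real.cos x) * Real.log (1 + Real.cos x))
        = (∫ x in (0:ℝ)..(2*π), (1 + Real.cos x) * Real.log (1 + Real.cos x))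
          + ∫ x in (2*π:ℝ)..(2*π + 2*π), (1 + Real.cos x) * Real.log (1 + Real.cos x) := by
      rw [mul_zero, hb]
      exact (intervalIntegral.integral_add_adjacent_intervals
        (G_intervalIntegrable 0 (2*π)) (G_intervalIntegrable (2*π) (2*π + 2*π))).symm
    rw [hsplit, hper.intervalIntegral_add_eq (2*π) 0, zero_add, integral_J]
    simp only [smul_eq_mul]
    ring
  rw [hexp, intervalIntegral.integral_sub (hG2int.const_mul (1/2))
    (((by fun_prop : Continuous fun y : ℝ => Real.cos y ^ 2).intervalIntegrable _ _).const_mul (Real.log 2)),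
    intervalIntegral.integral_const_mul, intervalIntegral.integral_const_mul, hX,
    integral_cos_sq]
  rw [Real.sin_two_pi, Real.sin_zero]
  ring

/-- Evaluation of `∫₀^{2π} (α + β cos x) log(a + b cos x) dx`
for `0 < |b| < a`, together with the boundary case `b = a` (where the convention
`0·log 0 = 0` is automatic since `Real.log 0 = 0`) and the special case
`∫₀^{2π} cos²y · log(cos²y) dy = π(1 − 2 log 2)`. -/
theorem integral_log_cos (a b α β : ℝ) (ha : 0 < a)
    (hb : 0 < |b|) (hba : |b| < a) :
    (∫ x in (0:ℝ)..(2 * π), (α + β * Real.cos x) * Real.log (a + b * Real.cos x)) =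
      2 * π * α * Real.log ((a + Real.sqrt (a ^ 2 - b ^ 2)) / 2) +
        2 * π * β * ((a - Real.sqrt (a ^ 2 - b ^ 2)) / b) ∧
    (∫ x in (0:ℝ)..(2 * π), (a + a * Real.cos x) * Real.log (a + a * Real.cos x)) =
      2 * π * a * (1 + Real.log (a / 2)) ∧
    (∫ y in (0:ℝ)..(2 * π), Real.cos y ^ 2 * Real.log (Real.cos y ^ 2)) =
      π * (1 - 2 * Real.log 2) := by
  exact ⟨part1 a b α β ha hb hba, part2 a ha, part3⟩
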